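/- Let k be a nonzero integer and n a positive integer. Define u : (0,∞) → ℝ by u(x) = x²·e^{−|k|x²/2}·∑_{j=0}^{n−1} (−1)^j · binom(n, n−1−j) · (|k|x²)^j / j!. Then for every x > 0 one has u''(x) − u'(x)/x − k²x²·u(x) = −4n|k|·u(x), and moreover ∫₀^∞ u(x)²·x^{−1} dx < ∞. -/

import Mathlib

open Real MeasureTheory

noncomputable def Efun (a x : ℝ) : ℝ := Real.exp (-(a * x ^ 2) / 2)

noncomputable def dcoefX (n : ℕ) (a : ℝ) (j : ℕ) : ℝ :=
  (-1 : ℝ) ^ j * (n.choose (n - 1 - j)) * a ^ j / j.factorial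

noncomputable def Sfun (n : ℕ) (a : ℝ) (x : ℝ) : ℝ :=
  ∑ j ∈ Finset.range n, dcoefX n a j * x ^ (2 * j + 2)

noncomputable def S1fun (n : ℕ) (a : ℝ) (x : ℝ) : ℝ :=
  ∑ j ∈ Finset.range n, dcoefX n a j * (((2 * j + 2 : ℕ) : ℝ) * x ^ (2 * j + 1))

noncomputable def S2fun (n : ℕ) (a : ℝ) (x : ℝ) : ℝ :=
  ∑ j ∈ Finset.range n, dcoefX n a j * (((2 * j + 2 : ℕ) : ℝ) * (((2 * j + 1 : ℕ) : ℝ) * x ^ (2 * j)))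

lemma hasDerivAt_S (n : ℕ) (a x : ℝ) : HasDerivAt (Sfun n a) (S1fun n a x) x := by
  apply HasDerivAt.fun_sum
  intro j _
  have h := (hasDerivAt_pow (2 * j + 2) x).const_mul (dcoefX n a j)
  rw [show 2 * j + 2 - 1 = 2 * j + 1 by omega] at h
  exact h

lemma hasDerivAt_S1 (n : ℕ) (a x : ℝ) : HasDerivAt (S1fun n a) (S2fun n a x) x := by
  apply HasDerivAt.fun_sum
  intro j _
  have h := ((hasDerivAt_pow (2 * j + 1) x).const_mul ((2 * j + 2 : ℕ) : ℝ)).const_mul (dcoefX n a j)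
  rw [show 2 * j + 1 - 1 = 2 * j by omega] at h
  exact h

lemma hasDerivAt_E (a x : ℝ) : HasDerivAt (Efun a) (-(a * x) * Efun a x) x := by
  have hq : HasDerivAt (fun y : ℝ => -(a * y ^ 2) / 2) (-(a * x)) x := by
    have := (((hasDerivAt_pow 2 x).const_mul a).neg.div_const 2)
    refine this.congr_deriv ?_
    simp
    ring
  have := hq.exp
  show HasDerivAt (fun y => Real.exp (-(a * y ^ 2) / 2)) (-(a * x) * Efun a x) x
  simpa [Efun, mul_comm] using this

lemma term_cancel (m : ℕ) (a x : ℝ) {j : ℕ} (hj : j < m) :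
    4 * ((j:ℝ)+1) * ((j:ℝ)+2) * dcoefX (m+1) a (j+1) * x ^ (2*(j+1)+1)
      + 4 * a * ((m:ℝ) - j) * dcoefX (m+1) a j * x ^ (2*j+3) = 0 := by
  have h1 : (m+1) - 1 - (j+1) = (m+1) - (j+2) := by omega
  have h2 : (m+1) - 1 - j = (m+1) - (j+1) := by omega
  have hs1 : (m+1).choose ((m+1) - (j+2)) = (m+1).choose (j+2) :=
    Nat.choose_symm (by omega)
  have hs2 : (m+1).choose ((m+1) - (j+1)) = (m+1).choose (j+1) :=
    Nat.choose_symm (by omega)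
  have hrec := Nat.choose_succ_right_eq (m+1) (j+1)
  rw [show m + 1 - (j+1) = m - j from by omega] at hrec
  have hR := congrArg (Nat.cast : ℕ → ℝ) hrec
  push_cast [Nat.cast_sub (by omega : j ≤ m)] at hR
  simp only [dcoefX, h1, h2, hs1, hs2, Nat.factorial_succ]
  have hf : ((j.factorial : ℝ)) ≠ 0 := by exact_mod_cast j.factorial_ne_zero
  push_cast
  field_simp
  linear_combination (-4 * (-1:ℝ)^j * a^(j+1) * x^(2*j+3)) * hR

lemma key_identity (m : ℕ) (a x : ℝ) :
    x * S2fun (m+1) a x - S1fun (m+1) a x - 2*a*x^2*S1fun (m+1) a x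
      + 4*((m:ℝ)+1)*a*x*Sfun (m+1) a x = 0 := by
  have step1 : x * S2fun (m+1) a x - S1fun (m+1) a x - 2*a*x^2*S1fun (m+1) a x
      + 4*((m:ℝ)+1)*a*x*Sfun (m+1) a x
      = ∑ j ∈ Finset.range (m+1),
          (4 * (j:ℝ) * ((j:ℝ)+1) * dcoefX (m+1) a j * x ^ (2*j+1)
            + 4 * a * ((m:ℝ) - j) * dcoefX (m+1) a j * x ^ (2*j+3)) := by
    simp only [Sfun, S1fun, S2fun, Finset.mul_sum]
    rw [← Finset.sum_sub_distrib, ← Finset.sum_sub_distrib, ← Finset.sum_add_distrib]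
    refine Finset.sum_congr rfl fun j _ => ?_
    push_cast
    ring
  rw [step1, Finset.sum_add_distrib,
    Finset.sum_range_succ' (fun j => 4 * (j:ℝ) * ((j:ℝ)+1) * dcoefX (m+1) a j * x ^ (2*j+1)) m,
    Finset.sum_range_succ (fun j => 4 * a * ((m:ℝ) - j) * dcoefX (m+1) a j * x ^ (2*j+3)) m]
  push_cast
  rw [show ((m:ℝ) - m) = 0 from by ring]
  simp only [mul_zero, zero_mul, add_zero, Nat.cast_zero]
  rw [← Finset.sum_add_distrib]
  apply Finset.sum_eq_zero
  intro j hj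
  have := term_cancel m a x (Finset.mem_range.mp hj)
  push_cast at this ⊢
  linarith [this]

/-- The function `u(x) = x²·e^{−|k|x²/2}·L¹_{n−1}(|k|x²)` (with the generalized
Laguerre polynomial written as an explicit finite sum) satisfies the eigenvalue
equation `u'' − u'/x − k²x²u = −4n|k|·u` of the `k`-th Fourier fiber of the
Grushin-cylinder Laplacian, and is square-integrable for the measure `x⁻¹dx`. -/
theorem grushin_cylinder_eigenfunction (k : ℤ) (hk : k ≠ 0) (n : ℕ) (hn : 0 < n)
    (u : ℝ → ℝ)
    (hu : ∀ x : ℝ, u x = x ^ 2 * Real.exp (-(|(k : ℝ)| * x ^ 2) / 2) *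
      ∑ j ∈ Finset.range n,
        (-1 : ℝ) ^ j * (n.choose (n - 1 - j)) * (|(k : ℝ)| * x ^ 2) ^ j / j.factorial) :
    (∀ x : ℝ, 0 < x →
      deriv (deriv u) x - deriv u x / x - (k : ℝ) ^ 2 * x ^ 2 * u x
        = -(4 * n * |(k : ℝ)|) * u x) ∧
    IntegrableOn (fun x : ℝ => (u x) ^ 2 / x) (Set.Ioi 0) := by
  set a : ℝ := |(k : ℝ)| with ha_def
  have ha : 0 < a := abs_pos.mpr (by exact_mod_cast hk)
  have hueq : u = fun x => Sfun n a x * Efun a x := by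
    funext x
    rw [hu]
    simp only [Sfun, Efun, dcoefX]
    rw [Finset.mul_sum, Finset.sum_mul]
    refine Finset.sum_congr rfl fun j _ => ?_
    ring
  have hd1 : (deriv fun y => Sfun n a y * Efun a y)
      = fun y => (S1fun n a y - a * y * Sfun n a y) * Efun a y := by
    funext y
    rw [((hasDerivAt_S n a y).fun_mul (hasDerivAt_E a y)).deriv]
    ring
  constructor
  · intro x hx
    simp only [hueq, hd1]
    have h2 : HasDerivAt (fun y => (S1fun n a y - a * y * Sfun n a y) * Efun a y)
        ((S2fun n a x - (a * 1 * Sfun n a x + a * x * S1fun n a x)) * Efun a x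
          + (S1fun n a x - a * x * Sfun n a x) * (-(a * x) * Efun a x)) x :=
      ((hasDerivAt_S1 n a x).sub
        (((hasDerivAt_id' x).const_mul a).mul (hasDerivAt_S n a x))).mul (hasDerivAt_E a x)
    rw [h2.deriv]
    obtain ⟨m, rfl⟩ := Nat.exists_eq_succ_of_ne_zero hn.ne'
    have hkey := key_identity m a x
    have hk2 : (k : ℝ) ^ 2 = a ^ 2 := (sq_abs _).symm
    rw [hk2]
    have hx0 : x ≠ 0 := hx.ne'
    field_simp
    push_cast
    linear_combination (Efun a x) * hkey
  · obtain ⟨m, hm⟩ := Nat.exists_eq_succ_of_ne_zero hn.ne'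
    have hint : IntegrableOn (fun x : ℝ => ∑ i ∈ Finset.range n, ∑ j ∈ Finset.range n,
        (dcoefX n a i * dcoefX n a j) * (x ^ (2*i+2*j+3) * Real.exp (-a * x ^ 2)))
        (Set.Ioi 0) := by
      apply MeasureTheory.integrable_finset_sum
      intro i _
      apply MeasureTheory.integrable_finset_sum
      intro j _
      have hgt : (-1:ℝ) < ((2*i+2*j+3 : ℕ) : ℝ) :=
        lt_of_lt_of_le (by norm_num) (Nat.cast_nonneg _)
      have h := integrableOn_rpow_mul_exp_neg_mul_sq ha hgt
      simp_rw [Real.rpow_natCast] at h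
      exact h.const_mul _
    apply hint.congr_fun ?_ measurableSet_Ioi
    intro x hx
    have hx0 : (x:ℝ) ≠ 0 := (ne_of_gt hx)
    have hE2 : Efun a x ^ 2 = Real.exp (-a * x ^ 2) := by
      rw [Efun, ← Real.exp_nat_mul]
      congr 1
      push_cast
      ring
    have expand : (Sfun n a x * Efun a x) ^ 2
        = ∑ i ∈ Finset.range n, ∑ j ∈ Finset.range n,
            (dcoefX n a i * dcoefX n a j) * (x ^ (2*i+2*j+4) * Real.exp (-a * x ^ 2)) := by
      rw [mul_pow, hE2, sq (Sfun n a x)]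
      rw [show Sfun n a x = ∑ j ∈ Finset.range n, dcoefX n a j * x ^ (2*j+2) from rfl]
      rw [Finset.sum_mul_sum, Finset.sum_mul]
      refine Finset.sum_congr rfl fun i _ => ?_
      rw [Finset.sum_mul]
      refine Finset.sum_congr rfl fun j _ => ?_
      ring
    simp only [hueq]
    rw [eq_div_iff hx0, Finset.sum_mul]
    rw [expand]
    refine Finset.sum_congr rfl fun i _ => ?_
    rw [Finset.sum_mul]
    refine Finset.sum_congr rfl fun j _ => ?_
    ring
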